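/- Fix constants L > 0, W > 0, R_S > 0 and reals α, μ, η₁, λ₁ with α < 0, −1 ≤ μ < 0, 0 < η₁ < −α, and −α − η₁ ≤ λ₁ ≤ −α + η₁. For continuously differentiable u and continuous p, q on D := [0,L] × [0,W], define ΔH := (1/2) ∫_D ( |∇u|² + R_S⁻² u² ) dx dy − (1/2) R_S⁻² α ∫_D ( p² − (2/3) μ⁻¹ q² ) dx dy, and the squared norm ‖(u,p,q)‖²(λ₁) := (1/2) ∫_D ( |∇u|² + R_S⁻² u² ) dx dy + (1/2) R_S⁻² λ₁ ∫_D ( p² + (2/3) q² ) dx dy. Then ΔH ≥ ((−α − η₁)/λ₁) · ‖(u,p,q)‖²(λ₁) (lower convexity estimate establishing Lyapunov stability for basic states with α < 0 and 0 > μ ≥ −1). -/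

import Mathlib

/-- Partial derivative in `x` of a field of `(x, y)`. -/
noncomputable def pdx (f : ℝ → ℝ → ℝ) (x y : ℝ) : ℝ := deriv (fun x' => f x' y) x

/-- Partial derivative in `y` of a field of `(x, y)`. -/
noncomputable def pdy (f : ℝ → ℝ → ℝ) (x y : ℝ) : ℝ := deriv (fun y' => f x y') y

/-- Tietze extension for a real-valued function continuous on a closed set. -/
lemma exists_cont_ext {s : Set (ℝ × ℝ)} (hs : IsClosed s) (f : ℝ × ℝ → ℝ)
    (hf : ContinuousOn f s) : ∃ g : ℝ × ℝ → ℝ, Continuous g ∧ ∀ z ∈ s, g z = f z := by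
  obtain ⟨g, hg⟩ := ContinuousMap.exists_restrict_eq (Y := ℝ) hs
    ⟨s.restrict f, hf.restrict⟩
  refine ⟨g, g.continuous, fun z hz => ?_⟩
  have := congrFun (congrArg DFunLike.coe hg) ⟨z, hz⟩
  exact this

/-- Lower convexity estimate for the pseudoenergy–momentum establishing Lyapunov
stability of the baroclinic zonal jet with `α < 0` and `0 > μ ≥ −1`: for
`0 < η₁ < −α` and `−α − η₁ ≤ lam₁ ≤ −α + η₁`,
`ΔH ≥ ((−α − η₁)/lam₁) · ‖(u,p,q)‖²(lam₁)`. -/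
theorem lyapunov_convexity_estimate_one
    (L W RS α μ η₁ lam₁ : ℝ) (hL : 0 < L) (hW : 0 < W) (hRS : 0 < RS)
    (hα : α < 0) (hμ1 : -1 ≤ μ) (hμ0 : μ < 0)
    (hη : 0 < η₁) (hη' : η₁ < -α)
    (hlamlo : -α - η₁ ≤ lam₁) (hlamhi : lam₁ ≤ -α + η₁)
    (u p q : ℝ → ℝ → ℝ)
    (hu : ContDiffOn ℝ 1 (fun z : ℝ × ℝ => u z.1 z.2) (Set.Icc 0 L ×ˢ Set.Icc 0 W))
    (hp : ContinuousOn (fun z : ℝ × ℝ => p z.1 z.2) (Set.Icc 0 L ×ˢ Set.Icc 0 W))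
    (hq : ContinuousOn (fun z : ℝ × ℝ => q z.1 z.2) (Set.Icc 0 L ×ˢ Set.Icc 0 W))
    (ΔH nrmSq : ℝ)
    (hΔH : ΔH = 1 / 2 * (∫ x in (0:ℝ)..L, ∫ y in (0:ℝ)..W,
        ((pdx u x y) ^ 2 + (pdy u x y) ^ 2 + (RS ^ 2)⁻¹ * (u x y) ^ 2))
      - 1 / 2 * (RS ^ 2)⁻¹ * α * ∫ x in (0:ℝ)..L, ∫ y in (0:ℝ)..W,
        ((p x y) ^ 2 - 2 / 3 * μ⁻¹ * (q x y) ^ 2))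
    (hnrm : nrmSq = 1 / 2 * (∫ x in (0:ℝ)..L, ∫ y in (0:ℝ)..W,
        ((pdx u x y) ^ 2 + (pdy u x y) ^ 2 + (RS ^ 2)⁻¹ * (u x y) ^ 2))
      + 1 / 2 * (RS ^ 2)⁻¹ * lam₁ * ∫ x in (0:ℝ)..L, ∫ y in (0:ℝ)..W,
        ((p x y) ^ 2 + 2 / 3 * (q x y) ^ 2)) :
    (-α - η₁) / lam₁ * nrmSq ≤ ΔH := by
  set s : Set (ℝ × ℝ) := Set.Icc 0 L ×ˢ Set.Icc 0 W with hs_def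
  have hs : IsClosed s := isClosed_Icc.prod isClosed_Icc
  obtain ⟨P, hPc, hPeq⟩ := exists_cont_ext hs _ hp
  obtain ⟨Q, hQc, hQeq⟩ := exists_cont_ext hs _ hq
  -- μ⁻¹ ≤ -1
  have hμinv : μ⁻¹ ≤ -1 := by
    have h1 : μ * μ⁻¹ = 1 := mul_inv_cancel₀ hμ0.ne
    have h2 : μ⁻¹ < 0 := inv_lt_zero.mpr hμ0
    nlinarith
  have hlam : 0 < lam₁ := lt_of_lt_of_le (by linarith) hlamlo
  set c : ℝ := (-α - η₁) / lam₁ with hc_def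
  have hclam : c * lam₁ = -α - η₁ := div_mul_cancel₀ _ hlam.ne'
  have hc0 : 0 ≤ c := div_nonneg (by linarith) hlam.le
  have hc1 : c ≤ 1 := (div_le_one hlam).mpr hlamlo
  set E : ℝ := ∫ x in (0:ℝ)..L, ∫ y in (0:ℝ)..W,
      ((pdx u x y) ^ 2 + (pdy u x y) ^ 2 + (RS ^ 2)⁻¹ * (u x y) ^ 2) with hE_def
  set J₁ : ℝ := ∫ x in (0:ℝ)..L, ∫ y in (0:ℝ)..W,
      ((p x y) ^ 2 - 2 / 3 * μ⁻¹ * (q x y) ^ 2) with hJ1_def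
  set J₂ : ℝ := ∫ x in (0:ℝ)..L, ∫ y in (0:ℝ)..W,
      ((p x y) ^ 2 + 2 / 3 * (q x y) ^ 2) with hJ2_def
  have hRS2 : (0:ℝ) < (RS ^ 2)⁻¹ := inv_pos.mpr (pow_pos hRS 2)
  -- E ≥ 0
  have hE : 0 ≤ E := by
    apply intervalIntegral.integral_nonneg hL.le
    intro x _
    apply intervalIntegral.integral_nonneg hW.le
    intro y _
    show 0 ≤ pdx u x y ^ 2 + pdy u x y ^ 2 + (RS ^ 2)⁻¹ * u x y ^ 2
    positivity
  -- J₂ ≥ 0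
  have hJ2 : 0 ≤ J₂ := by
    apply intervalIntegral.integral_nonneg hL.le
    intro x _
    apply intervalIntegral.integral_nonneg hW.le
    intro y _
    show 0 ≤ p x y ^ 2 + 2 / 3 * q x y ^ 2
    positivity
  -- rewrite J₁, J₂ in terms of the extensions
  have hmem : ∀ x ∈ Set.Icc (0:ℝ) L, ∀ y ∈ Set.Icc (0:ℝ) W, (x, y) ∈ s := by
    intro x hx y hy; exact Set.mk_mem_prod hx hy
  have hJ1' : J₁ = ∫ x in (0:ℝ)..L, ∫ y in (0:ℝ)..W,
      (P (x, y) ^ 2 - 2 / 3 * μ⁻¹ * Q (x, y) ^ 2) := by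
    apply intervalIntegral.integral_congr
    intro x hx
    rw [Set.uIcc_of_le hL.le] at hx
    apply intervalIntegral.integral_congr
    intro y hy
    rw [Set.uIcc_of_le hW.le] at hy
    have hP : P (x, y) = p x y := hPeq (x, y) (hmem x hx y hy)
    have hQ : Q (x, y) = q x y := hQeq (x, y) (hmem x hx y hy)
    show p x y ^ 2 - 2 / 3 * μ⁻¹ * q x y ^ 2 = P (x, y) ^ 2 - 2 / 3 * μ⁻¹ * Q (x, y) ^ 2
    rw [hP, hQ]
  have hJ2' : J₂ = ∫ x in (0:ℝ)..L, ∫ y in (0:ℝ)..W,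
      (P (x, y) ^ 2 + 2 / 3 * Q (x, y) ^ 2) := by
    apply intervalIntegral.integral_congr
    intro x hx
    rw [Set.uIcc_of_le hL.le] at hx
    apply intervalIntegral.integral_congr
    intro y hy
    rw [Set.uIcc_of_le hW.le] at hy
    have hP : P (x, y) = p x y := hPeq (x, y) (hmem x hx y hy)
    have hQ : Q (x, y) = q x y := hQeq (x, y) (hmem x hx y hy)
    show p x y ^ 2 + 2 / 3 * q x y ^ 2 = P (x, y) ^ 2 + 2 / 3 * Q (x, y) ^ 2
    rw [hP, hQ]
  -- continuity of inner integrals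
  have hG1 : Continuous fun x : ℝ => ∫ y in (0:ℝ)..W,
      (P (x, y) ^ 2 - 2 / 3 * μ⁻¹ * Q (x, y) ^ 2) := by
    apply intervalIntegral.continuous_parametric_intervalIntegral_of_continuous'
      (f := fun x y => P (x, y) ^ 2 - 2 / 3 * μ⁻¹ * Q (x, y) ^ 2)
    exact ((hPc.pow 2).sub (continuous_const.mul (hQc.pow 2)))
  have hG2 : Continuous fun x : ℝ => ∫ y in (0:ℝ)..W,
      (P (x, y) ^ 2 + 2 / 3 * Q (x, y) ^ 2) := by
    apply intervalIntegral.continuous_parametric_intervalIntegral_of_continuous'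
      (f := fun x y => P (x, y) ^ 2 + 2 / 3 * Q (x, y) ^ 2)
    exact ((hPc.pow 2).add (continuous_const.mul (hQc.pow 2)))
  -- J₂ ≤ J₁
  have hJle : J₂ ≤ J₁ := by
    rw [hJ1', hJ2']
    apply intervalIntegral.integral_mono_on hL.le
      (hG2.intervalIntegrable 0 L) (hG1.intervalIntegrable 0 L)
    intro x _
    apply intervalIntegral.integral_mono_on hW.le
    · exact (((hPc.comp (Continuous.prodMk_right x)).pow 2).add
        (continuous_const.mul ((hQc.comp (Continuous.prodMk_right x)).pow 2))).intervalIntegrable 0 W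
    · exact (((hPc.comp (Continuous.prodMk_right x)).pow 2).sub
        (continuous_const.mul ((hQc.comp (Continuous.prodMk_right x)).pow 2))).intervalIntegrable 0 W
    · intro y _
      show P (x, y) ^ 2 + 2 / 3 * Q (x, y) ^ 2 ≤ P (x, y) ^ 2 - 2 / 3 * μ⁻¹ * Q (x, y) ^ 2
      have := mul_nonneg (by linarith : (0:ℝ) ≤ -μ⁻¹ - 1) (sq_nonneg (Q (x, y)))
      nlinarith
  -- final algebra
  have hnrm' : c * nrmSq = c * (E / 2) + 1 / 2 * (RS ^ 2)⁻¹ * ((-α - η₁) * J₂) := by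
    rw [hnrm, ← hclam]; ring
  have hΔH' : ΔH = E / 2 + 1 / 2 * (RS ^ 2)⁻¹ * ((-α) * J₁) := by
    rw [hΔH]; ring
  rw [hnrm', hΔH']
  have h1 : c * (E / 2) ≤ E / 2 := by
    have := mul_le_mul_of_nonneg_right hc1 (by linarith : (0:ℝ) ≤ E / 2)
    linarith
  have h2 : (-α - η₁) * J₂ ≤ (-α) * J₁ :=
    le_trans (mul_le_mul_of_nonneg_right (by linarith) hJ2)
      (mul_le_mul_of_nonneg_left hJle (by linarith))
  have h3 : 1 / 2 * (RS ^ 2)⁻¹ * ((-α - η₁) * J₂) ≤ 1 / 2 * (RS ^ 2)⁻¹ * ((-α) * J₁) := by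
    apply mul_le_mul_of_nonneg_left h2
    positivity
  linarith
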